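/- Let μ = (μ₁, μ₂, μ₃) : ℝ⁶ → ℝ³ with μ₁ = zb + yc, μ₂ = az + xc, μ₃ = −ay + bx. Then the rank of the derivative Dμ (i.e. the dimension of the range of the Fréchet derivative of μ, a linear map ℝ⁶ → ℝ³) equals 2 at every point of the form (q, 0) with q = (x,y,z) ≠ 0 (the zero section minus the origin) and at every point of the form (0, p) with p = (a,b,c) ≠ 0 (the fiber over the origin minus the origin). -/

import Mathlib

noncomputable section

/-- `ℝ⁶ = T*ℝ³` with base coordinates `q = (x,y,z)` and fiber coordinates `p = (a,b,c)`. -/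
abbrev E6 : Type := (Fin 3 → ℝ) × (Fin 3 → ℝ)

/-- Moment map component `μ₁ = zb + yc`. -/
def mu1 (w : E6) : ℝ := w.1 2 * w.2 1 + w.1 1 * w.2 2

/-- Moment map component `μ₂ = az + xc`. -/
def mu2 (w : E6) : ℝ := w.2 0 * w.1 2 + w.1 0 * w.2 2

/-- Moment map component `μ₃ = −ay + bx`. -/
def mu3 (w : E6) : ℝ := -(w.2 0 * w.1 1) + w.2 1 * w.1 0

/-- The moment map `μ = (μ₁, μ₂, μ₃) : ℝ⁶ → ℝ³`. -/
def muMap (w : E6) : Fin 3 → ℝ := ![mu1 w, mu2 w, mu3 w]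

/-- The moment map as a bilinear map in `(q, p)`. -/
def Blin : (Fin 3 → ℝ) →ₗ[ℝ] (Fin 3 → ℝ) →ₗ[ℝ] (Fin 3 → ℝ) :=
  LinearMap.mk₂ ℝ
    (fun q p => ![q 2 * p 1 + q 1 * p 2, p 0 * q 2 + q 0 * p 2, -(p 0 * q 1) + p 1 * q 0])
    (by intro q q' p; funext i; fin_cases i <;> simp <;> ring)
    (by intro c q p; funext i; fin_cases i <;> simp <;> ring)
    (by intro q p p'; funext i; fin_cases i <;> simp <;> ring)
    (by intro c q p; funext i; fin_cases i <;> simp <;> ring)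

/-- Continuous version of `Blin`. -/
def Bc : (Fin 3 → ℝ) →L[ℝ] (Fin 3 → ℝ) →L[ℝ] (Fin 3 → ℝ) :=
  LinearMap.toContinuousLinearMap
    { toFun := fun q => LinearMap.toContinuousLinearMap (Blin q)
      map_add' := by intro q q'; ext p; simp
      map_smul' := by intro c q; ext p; simp }

lemma muMap_eq : muMap = fun w : E6 => Bc w.1 w.2 := rfl

lemma hBc : IsBoundedBilinearMap ℝ (fun w : E6 => Bc w.1 w.2) :=
  Bc.isBoundedBilinearMap

/-- dot product functional -/
def dotL (c : Fin 3 → ℝ) : (Fin 3 → ℝ) →ₗ[ℝ] ℝ :=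
  { toFun := fun v => c 0 * v 0 + c 1 * v 1 + c 2 * v 2
    map_add' := by intro a b; simp; ring
    map_smul' := by intro r a; simp; ring }

@[simp] lemma dotL_apply (c v : Fin 3 → ℝ) :
    dotL c v = c 0 * v 0 + c 1 * v 1 + c 2 * v 2 := rfl

/-- A subspace of `ℝ³` annihilated by a nonzero functional and containing two linearly
independent vectors has dimension 2. -/
lemma rank_aux (S : Submodule ℝ (Fin 3 → ℝ)) (f : (Fin 3 → ℝ) →ₗ[ℝ] ℝ)
    (x : Fin 3 → ℝ) (hx : f x ≠ 0) (hSf : ∀ v ∈ S, f v = 0)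
    (u v : Fin 3 → ℝ) (hu : u ∈ S) (hv : v ∈ S)
    (h : LinearIndependent ℝ ![u, v]) : Module.finrank ℝ S = 2 := by
  refine le_antisymm ?_ ?_
  · have hker : S ≤ LinearMap.ker f := fun w hw => LinearMap.mem_ker.2 (hSf w hw)
    have hlt : LinearMap.ker f < ⊤ := by
      rw [lt_top_iff_ne_top]
      intro ht
      exact hx (LinearMap.mem_ker.1 (ht ▸ (Submodule.mem_top : x ∈ (⊤ : Submodule ℝ _))))
    have h1 := Submodule.finrank_lt (K := ℝ) (V := Fin 3 → ℝ) hlt.ne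
    have h2 := Submodule.finrank_mono hker
    have h3 : Module.finrank ℝ (Fin 3 → ℝ) = 3 := by simp
    omega
  · have hspan : Submodule.span ℝ (Set.range ![u, v]) ≤ S := by
      rw [Submodule.span_le]
      rintro _ ⟨i, rfl⟩
      fin_cases i <;> simpa
    have hcard := finrank_span_eq_card h
    simp only [Fintype.card_fin] at hcard
    calc 2 = Module.finrank ℝ (Submodule.span ℝ (Set.range ![u, v])) := hcard.symm
      _ ≤ Module.finrank ℝ S := Submodule.finrank_mono hspan

lemma range_zero_section (q : Fin 3 → ℝ) :
    LinearMap.range ((fderiv ℝ muMap (q, 0) : E6 →ₗ[ℝ] Fin 3 → ℝ)) = LinearMap.range (Blin q) := by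
  have hd : fderiv ℝ muMap (q, 0) = hBc.deriv (q, 0) := by
    rw [muMap_eq]; exact (hBc.hasFDerivAt (q, 0)).fderiv
  rw [hd]
  ext y
  constructor
  · rintro ⟨⟨v, w⟩, rfl⟩
    refine ⟨w, ?_⟩
    show Blin q w = Bc q w + Bc v 0
    rw [(Bc v).map_zero, add_zero]; rfl
  · rintro ⟨w, rfl⟩
    refine ⟨(0, w), ?_⟩
    show Bc q w + Bc 0 0 = Blin q w
    rw [(Bc 0).map_zero, add_zero]; rfl

lemma range_fiber (p : Fin 3 → ℝ) :
    LinearMap.range ((fderiv ℝ muMap (0, p) : E6 →ₗ[ℝ] Fin 3 → ℝ)) = LinearMap.range (Blin.flip p) := by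
  have hd : fderiv ℝ muMap (0, p) = hBc.deriv (0, p) := by
    rw [muMap_eq]; exact (hBc.hasFDerivAt (0, p)).fderiv
  rw [hd]
  ext y
  constructor
  · rintro ⟨⟨v, w⟩, rfl⟩
    refine ⟨v, ?_⟩
    show Blin v p = Bc 0 w + Bc v p
    have h0 : Bc (0 : Fin 3 → ℝ) = 0 := Bc.map_zero
    rw [h0]; simp; rfl
  · rintro ⟨v, rfl⟩
    refine ⟨(v, 0), ?_⟩
    show Bc 0 0 + Bc v p = Blin.flip p v
    have h0 : Bc (0 : Fin 3 → ℝ) = 0 := Bc.map_zero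
    rw [h0]; simp; rfl

lemma Blin_apply (q w : Fin 3 → ℝ) :
    Blin q w = ![q 2 * w 1 + q 1 * w 2, w 0 * q 2 + q 0 * w 2, -(w 0 * q 1) + w 1 * q 0] := rfl

/-- The derivative of the moment map `μ` has rank exactly 2 at every nonzero point of the
zero section `(q,0)`, `q ≠ 0`, and at every nonzero point `(0,p)`, `p ≠ 0`, of the fiber
over the origin: the corresponding orbits of the lifted linear action are 2-dimensional. -/
theorem moment_map_rank_two_on_zero_section_and_fiber :
    (∀ q : Fin 3 → ℝ, q ≠ 0 →
      Module.finrank ℝ (LinearMap.range ((fderiv ℝ muMap (q, 0) : E6 →ₗ[ℝ] Fin 3 → ℝ))) = 2) ∧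
    (∀ p : Fin 3 → ℝ, p ≠ 0 →
      Module.finrank ℝ (LinearMap.range ((fderiv ℝ muMap (0, p) : E6 →ₗ[ℝ] Fin 3 → ℝ))) = 2) := by
  constructor
  · intro q hq
    rw [range_zero_section]
    obtain ⟨i, hi⟩ : ∃ i, q i ≠ 0 := by
      by_contra hc
      push_neg at hc
      exact hq (funext hc)
    have hSf : ∀ v ∈ LinearMap.range (Blin q), dotL ![q 0, -q 1, -q 2] v = 0 := by
      rintro _ ⟨w, rfl⟩
      simp [Blin_apply]; ring
    fin_cases i
    · -- q 0 ≠ 0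
      refine rank_aux _ (dotL ![q 0, -q 1, -q 2]) ![1, 0, 0] (by simpa using hi) hSf
        ![q 2, 0, q 0] ![q 1, q 0, 0]
        ⟨![0, 1, 0], by funext j; fin_cases j <;> simp [Blin_apply]⟩
        ⟨![0, 0, 1], by funext j; fin_cases j <;> simp [Blin_apply]⟩ ?_
      rw [LinearIndependent.pair_iff]
      intro s t hst
      have h1 := congrFun hst 1
      have h2 := congrFun hst 2
      simp at h1 h2
      constructor
      · rcases h2 with h2 | h2; exact h2; exact absurd h2 hi
      · rcases h1 with h1 | h1; exact h1; exact absurd h1 hi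
    · -- q 1 ≠ 0
      refine rank_aux _ (dotL ![q 0, -q 1, -q 2]) ![0, 1, 0] (by simpa using hi) hSf
        ![0, q 2, -q 1] ![q 1, q 0, 0]
        ⟨![1, 0, 0], by funext j; fin_cases j <;> simp [Blin_apply]⟩
        ⟨![0, 0, 1], by funext j; fin_cases j <;> simp [Blin_apply]⟩ ?_
      rw [LinearIndependent.pair_iff]
      intro s t hst
      have h0 := congrFun hst 0
      have h2 := congrFun hst 2
      simp at h0 h2
      constructor
      · rcases h2 with h2 | h2; exact h2; exact absurd h2 hi
      · rcases h0 with h0 | h0; exact h0; exact absurd h0 hi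
    · -- q 2 ≠ 0
      refine rank_aux _ (dotL ![q 0, -q 1, -q 2]) ![0, 0, 1] (by simpa using hi) hSf
        ![0, q 2, -q 1] ![q 2, 0, q 0]
        ⟨![1, 0, 0], by funext j; fin_cases j <;> simp [Blin_apply]⟩
        ⟨![0, 1, 0], by funext j; fin_cases j <;> simp [Blin_apply]⟩ ?_
      rw [LinearIndependent.pair_iff]
      intro s t hst
      have h0 := congrFun hst 0
      have h1 := congrFun hst 1
      simp at h0 h1
      constructor
      · rcases h1 with h1 | h1; exact h1; exact absurd h1 hi
      · rcases h0 with h0 | h0; exact h0; exact absurd h0 hi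
  · intro p hp
    rw [range_fiber]
    obtain ⟨i, hi⟩ : ∃ i, p i ≠ 0 := by
      by_contra hc
      push_neg at hc
      exact hp (funext hc)
    have hSf : ∀ v ∈ LinearMap.range (Blin.flip p), dotL ![p 0, -p 1, p 2] v = 0 := by
      rintro _ ⟨w, rfl⟩
      show dotL ![p 0, -p 1, p 2] (Blin w p) = 0
      simp [Blin_apply]; ring
    fin_cases i
    · -- p 0 ≠ 0
      refine rank_aux _ (dotL ![p 0, -p 1, p 2]) ![1, 0, 0] (by simpa using hi) hSf
        ![p 2, 0, -p 0] ![p 1, p 0, 0]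
        ⟨![0, 1, 0], by funext j; fin_cases j <;> simp [Blin_apply]⟩
        ⟨![0, 0, 1], by funext j; fin_cases j <;> simp [Blin_apply]⟩ ?_
      rw [LinearIndependent.pair_iff]
      intro s t hst
      have h1 := congrFun hst 1
      have h2 := congrFun hst 2
      simp at h1 h2
      constructor
      · rcases h2 with h2 | h2; exact h2; exact absurd h2 hi
      · rcases h1 with h1 | h1; exact h1; exact absurd h1 hi
    · -- p 1 ≠ 0
      refine rank_aux _ (dotL ![p 0, -p 1, p 2]) ![0, 1, 0] (by simpa using hi) hSf
        ![0, p 2, p 1] ![p 1, p 0, 0]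
        ⟨![1, 0, 0], by funext j; fin_cases j <;> simp [Blin_apply]⟩
        ⟨![0, 0, 1], by funext j; fin_cases j <;> simp [Blin_apply]⟩ ?_
      rw [LinearIndependent.pair_iff]
      intro s t hst
      have h0 := congrFun hst 0
      have h2 := congrFun hst 2
      simp at h0 h2
      constructor
      · rcases h2 with h2 | h2; exact h2; exact absurd h2 hi
      · rcases h0 with h0 | h0; exact h0; exact absurd h0 hi
    · -- p 2 ≠ 0
      refine rank_aux _ (dotL ![p 0, -p 1, p 2]) ![0, 0, 1] (by simpa using hi) hSf
        ![0, p 2, p 1] ![p 2, 0, -p 0]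
        ⟨![1, 0, 0], by funext j; fin_cases j <;> simp [Blin_apply]⟩
        ⟨![0, 1, 0], by funext j; fin_cases j <;> simp [Blin_apply]⟩ ?_
      rw [LinearIndependent.pair_iff]
      intro s t hst
      have h0 := congrFun hst 0
      have h1 := congrFun hst 1
      simp at h0 h1
      constructor
      · rcases h1 with h1 | h1; exact h1; exact absurd h1 hi
      · rcases h0 with h0 | h0; exact h0; exact absurd h0 hi
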